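/- Let X be an integrable real random variable on a probability space with mean μ = 𝔼[X], let K > 0 and R ≥ 0 with |μ| ≤ R, and suppose ℙ[|X − μ| ≥ t] ≤ 2·exp(−t²/(2K²)) for all t ≥ 0. Let Δ ≥ K, L = −R − Δ and H = R + Δ. Then |𝔼[X] − 𝔼[X · 1_{L ≤ X ≤ H}]| ≤ 4·(2Δ + R) · exp(−Δ²/(2K²)). -/

import Mathlib

open MeasureTheory

open Set Real in
lemma aux_integral_exp_shift (a b : ℝ) (hb : 0 < b) :
    ∫ t in Set.Ioi a, Real.exp (-b * (t - a)) = 1 / b := by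
  have hderiv : ∀ x ∈ Set.Ici a,
      HasDerivAt (fun t => -(1/b) * Real.exp (-b * (t - a))) (Real.exp (-b * (x - a))) x := by
    intro x _
    have h1 : HasDerivAt (fun t : ℝ => -b * (t - a)) (-b) x := by
      simpa using ((hasDerivAt_id x).sub_const a).const_mul (-b)
    have h2 := (h1.exp).const_mul (-(1/b))
    refine h2.congr_deriv ?_
    field_simp
  have hint : IntegrableOn (fun t => Real.exp (-b * (t - a))) (Set.Ioi a) := by
    have h := ((exp_neg_integrableOn_Ioi a hb).const_mul (Real.exp (b * a)))
    refine IntegrableOn.congr_fun h (fun t _ => ?_) measurableSet_Ioi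
    rw [← Real.exp_add]; ring_nf
  have htend : Filter.Tendsto (fun t => -(1/b) * Real.exp (-b * (t - a)))
      Filter.atTop (nhds 0) := by
    have h0 : Filter.Tendsto (fun t : ℝ => -b * (t - a)) Filter.atTop Filter.atBot := by
      have : Filter.Tendsto (fun t : ℝ => t - a) Filter.atTop Filter.atTop :=
        Filter.tendsto_atTop_add_const_right _ _ Filter.tendsto_id
      exact Filter.Tendsto.const_mul_atTop_of_neg (by linarith) this
    have h1 := Real.tendsto_exp_atBot.comp h0
    have h2 := h1.const_mul (-(1/b))
    simpa using h2
  have := integral_Ioi_of_hasDerivAt_of_tendsto' hderiv hint htend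
  rw [this]; simp

/-- Truncation error bound for sub-Gaussian random variables: if `X` is integrable
with mean `μ`, `|μ| ≤ R`, and `ℙ[|X − μ| ≥ t] ≤ 2 exp(−t²/(2K²))` for all `t ≥ 0`,
then for `Δ ≥ K`, `L = −R − Δ`, `H = R + Δ`,
`|𝔼[X] − 𝔼[X · 1_{L ≤ X ≤ H}]| ≤ 4 (2Δ + R) exp(−Δ²/(2K²))`. -/
theorem subgaussian_truncation_error {Ω : Type*} [MeasureSpace Ω]
    [IsProbabilityMeasure (volume : Measure Ω)] (X : Ω → ℝ)
    (hXm : Measurable X) (hXi : Integrable X) (μ : ℝ) (hμ : μ = ∫ ω, X ω)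
    (K : ℝ) (hK : 0 < K) (R : ℝ) (hR : 0 ≤ R) (hμR : |μ| ≤ R)
    (htail : ∀ t : ℝ, 0 ≤ t →
      (volume {ω | t ≤ |X ω - μ|}).toReal ≤ 2 * Real.exp (-(t ^ 2) / (2 * K ^ 2)))
    (Δ : ℝ) (hΔ : K ≤ Δ) (L H : ℝ) (hL : L = -R - Δ) (hH : H = R + Δ) :
    |(∫ ω, X ω) -
        ∫ ω, X ω * Set.indicator {ω' | L ≤ X ω' ∧ X ω' ≤ H} (fun _ => (1 : ℝ)) ω| ≤
      4 * (2 * Δ + R) * Real.exp (-(Δ ^ 2) / (2 * K ^ 2)) := by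
  have hΔ0 : 0 < Δ := lt_of_lt_of_le hK hΔ
  set E : ℝ := Real.exp (-(Δ ^ 2) / (2 * K ^ 2)) with hE
  have hE0 : 0 ≤ E := le_of_lt (Real.exp_pos _)
  set S : Set Ω := {ω' | L ≤ X ω' ∧ X ω' ≤ H} with hSdef
  have hSm : MeasurableSet S := hXm measurableSet_Icc
  set A : Set Ω := {ω | Δ ≤ |X ω - μ|} with hAdef
  have hAm : MeasurableSet A :=
    measurableSet_le measurable_const (hXm.sub measurable_const).abs
  -- S complement is contained in A
  have hScA : Sᶜ ⊆ A := by
    intro ω hω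
    simp only [hSdef, Set.mem_compl_iff, Set.mem_setOf_eq, not_and_or, not_le] at hω
    have hml := abs_le.mp hμR
    rcases hω with h | h
    · rw [hL] at h
      have : X ω - μ ≤ -Δ := by linarith [hml.1]
      simp only [hAdef, Set.mem_setOf_eq]
      rw [abs_sub_comm]
      calc Δ ≤ μ - X ω := by linarith
        _ ≤ |μ - X ω| := le_abs_self _
    · rw [hH] at h
      have : Δ ≤ X ω - μ := by linarith [hml.2]
      exact le_trans this (le_abs_self _)
  -- rewrite the truncated integral
  have hrw : (fun ω => X ω * Set.indicator S (fun _ => (1:ℝ)) ω) = S.indicator X := by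
    funext ω; by_cases h : ω ∈ S <;> simp [h]
  have hXabs : Integrable (fun ω => |X ω - μ|) := (hXi.sub (integrable_const μ)).abs
  set Y : Ω → ℝ := A.indicator (fun ω => |X ω - μ|) with hYdef
  have hYi : Integrable Y := hXabs.indicator hAm
  have hYnn : 0 ≤ᵐ[volume] Y :=
    Filter.Eventually.of_forall (fun ω => Set.indicator_nonneg (fun _ _ => abs_nonneg _) ω)
  -- difference equals integral over Sᶜ
  have hdiff : (∫ ω, X ω) - (∫ ω, X ω * Set.indicator S (fun _ => (1:ℝ)) ω)
      = ∫ ω in Sᶜ, X ω := by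
    rw [hrw, integral_indicator hSm]
    have := integral_add_compl hSm hXi
    linarith [this]
  -- probability of A is small
  have hPA : (volume A).toReal ≤ 2 * E := htail Δ (le_of_lt hΔ0)
  have hPSc : (volume Sᶜ).toReal ≤ 2 * E := by
    refine le_trans ?_ hPA
    exact ENNReal.toReal_mono (measure_ne_top _ _) (measure_mono hScA)
  -- layer cake bound on ∫ Y
  set g : ℝ → ℝ := fun t => (volume {a | t < Y a}).toReal with hgdef
  have hganti : Antitone g := by
    intro s t hst
    exact ENNReal.toReal_mono (measure_ne_top _ _)
      (measure_mono (fun ω h => lt_of_le_of_lt hst h))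
  have hgm : Measurable g := hganti.measurable
  have hgnn : ∀ t, 0 ≤ g t := fun t => ENNReal.toReal_nonneg
  set b : ℝ := Δ / K ^ 2 with hbdef
  have hb0 : 0 < b := div_pos hΔ0 (by positivity)
  set hfun : ℝ → ℝ := fun t => if t ≤ Δ then 2*E else 2*E*Real.exp (-b * (t - Δ)) with hhdef
  -- pointwise bound g ≤ hfun on Ioi 0
  have hgle : ∀ t ∈ Set.Ioi (0:ℝ), g t ≤ hfun t := by
    intro t ht
    simp only [Set.mem_Ioi] at ht
    by_cases hcase : t ≤ Δ
    · simp only [hhdef, if_pos hcase]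
      refine le_trans ?_ hPA
      refine ENNReal.toReal_mono (measure_ne_top _ _) (measure_mono ?_)
      intro ω hω
      simp only [Set.mem_setOf_eq] at hω
      by_contra hA
      simp [hYdef, Set.indicator_of_notMem hA] at hω
      linarith
    · push_neg at hcase
      simp only [hhdef, if_neg (not_le.mpr hcase)]
      have h1 : g t ≤ (volume {ω | t ≤ |X ω - μ|}).toReal := by
        refine ENNReal.toReal_mono (measure_ne_top _ _) (measure_mono ?_)
        intro ω hω
        simp only [Set.mem_setOf_eq] at hω ⊢
        by_cases hA : ω ∈ A
        · simp only [hYdef, Set.indicator_of_mem hA] at hω; linarith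
        · simp [hYdef, Set.indicator_of_notMem hA] at hω; linarith
      refine le_trans h1 (le_trans (htail t (by linarith)) ?_)
      have hexp : Real.exp (-(t^2)/(2*K^2)) ≤ E * Real.exp (-b * (t - Δ)) := by
        rw [hE, ← Real.exp_add]
        apply Real.exp_le_exp.mpr
        have hK2 : (0:ℝ) < K ^ 2 := by positivity
        have key : (-(t^2))/(2*K^2)
            = -(Δ^2)/(2*K^2) + (-(Δ/K^2))*(t-Δ) - (t-Δ)^2/(2*K^2) := by
          field_simp; ring
        have hnn : 0 ≤ (t-Δ)^2/(2*K^2) := by positivity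
        rw [hbdef]
        linarith
      linarith
  -- integrability of hfun on Ioi 0
  have hsplit : Set.Ioc 0 Δ ∪ Set.Ioi Δ = Set.Ioi (0:ℝ) :=
    Set.Ioc_union_Ioi_eq_Ioi (le_of_lt hΔ0)
  have hint1 : IntegrableOn hfun (Set.Ioc 0 Δ) := by
    have hc : IntegrableOn (fun _ : ℝ => 2*E) (Set.Ioc 0 Δ) :=
      integrableOn_const measure_Ioc_lt_top.ne
    refine IntegrableOn.congr_fun hc ?_ measurableSet_Ioc
    intro t ht
    simp only [hhdef, if_pos ht.2]
  have hexpint : IntegrableOn (fun t => Real.exp (-b * (t - Δ))) (Set.Ioi Δ) := by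
    have h := (exp_neg_integrableOn_Ioi Δ hb0).const_mul (Real.exp (b * Δ))
    refine IntegrableOn.congr_fun h (fun t _ => ?_) measurableSet_Ioi
    rw [← Real.exp_add]; ring_nf
  have hint2 : IntegrableOn hfun (Set.Ioi Δ) := by
    refine IntegrableOn.congr_fun (hexpint.const_mul (2*E)) ?_ measurableSet_Ioi
    intro t ht
    simp only [Set.mem_Ioi] at ht
    simp only [hhdef, if_neg (not_le.mpr ht)]
  have hinth : IntegrableOn hfun (Set.Ioi 0) := by
    rw [← hsplit]; exact hint1.union hint2
  have hhnn : ∀ t, 0 ≤ hfun t := by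
    intro t
    simp only [hhdef]
    split <;> positivity
  have hintg : IntegrableOn g (Set.Ioi 0) := by
    refine Integrable.mono hinth (hgm.aestronglyMeasurable) ?_
    rw [ae_restrict_iff' measurableSet_Ioi]
    refine Filter.Eventually.of_forall (fun t ht => ?_)
    rw [Real.norm_eq_abs, Real.norm_eq_abs, abs_of_nonneg (hgnn t), abs_of_nonneg (hhnn t)]
    exact hgle t ht
  -- compute ∫ hfun
  have hI1 : ∫ t in Set.Ioc 0 Δ, hfun t = 2 * E * Δ := by
    rw [setIntegral_congr_fun (g := fun _ => 2*E) measurableSet_Ioc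
      (fun t ht => by simp only [hhdef, if_pos ht.2])]
    rw [setIntegral_const]
    simp [Real.volume_Ioc, ENNReal.toReal_ofReal (le_of_lt hΔ0), smul_eq_mul]
    rw [max_eq_left hΔ0.le]; ring
  have hI2 : ∫ t in Set.Ioi Δ, hfun t = 2 * E * (1 / b) := by
    rw [setIntegral_congr_fun (g := fun t => 2*E*Real.exp (-b * (t - Δ))) measurableSet_Ioi
      (fun t ht => by simp only [hhdef, if_neg (not_le.mpr (Set.mem_Ioi.mp ht))])]
    rw [integral_const_mul, aux_integral_exp_shift Δ b hb0]
  have hYle : ∫ ω, Y ω ≤ 4 * Δ * E := by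
    rw [hYi.integral_eq_integral_meas_lt hYnn]
    have step1 : ∫ t in Set.Ioi (0:ℝ), g t ≤ ∫ t in Set.Ioi (0:ℝ), hfun t :=
      setIntegral_mono_on hintg hinth measurableSet_Ioi hgle
    have step2 : ∫ t in Set.Ioi (0:ℝ), hfun t = 2*E*Δ + 2*E*(1/b) := by
      rw [← hsplit, setIntegral_union (Set.Ioc_disjoint_Ioi le_rfl) measurableSet_Ioi hint1 hint2,
        hI1, hI2]
    have hble : 1 / b ≤ Δ := by
      rw [hbdef, one_div, inv_div]
      rw [div_le_iff₀ hΔ0]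
      nlinarith
    have : 2*E*(1/b) ≤ 2*E*Δ := by
      apply mul_le_mul_of_nonneg_left hble (by positivity)
    calc ∫ t in Set.Ioi (0:ℝ), g t ≤ 2*E*Δ + 2*E*(1/b) := by rw [← step2]; exact step1
      _ ≤ 4 * Δ * E := by linarith
  -- put it together
  rw [hdiff]
  have habs : |∫ ω in Sᶜ, X ω| ≤ ∫ ω in Sᶜ, |X ω| := by
    simpa [Real.norm_eq_abs] using
      norm_integral_le_integral_norm (μ := volume.restrict Sᶜ) X
  have hXiSc : IntegrableOn X Sᶜ := hXi.integrableOn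
  have hbnd : ∫ ω in Sᶜ, |X ω| ≤ (∫ ω in Sᶜ, |X ω - μ|) + R * (volume Sᶜ).toReal := by
    have h1 : ∫ ω in Sᶜ, |X ω| ≤ ∫ ω in Sᶜ, (|X ω - μ| + R) := by
      refine setIntegral_mono_on hXiSc.abs
        ((hXabs.add (integrable_const R)).integrableOn) hSm.compl ?_
      intro ω _
      have := abs_le.mp hμR
      calc |X ω| = |(X ω - μ) + μ| := by ring_nf
        _ ≤ |X ω - μ| + |μ| := abs_add_le _ _
        _ ≤ |X ω - μ| + R := by linarith [hμR]
    rw [integral_add hXabs.integrableOn (integrable_const R).integrableOn,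
      setIntegral_const] at h1
    calc ∫ ω in Sᶜ, |X ω| ≤ (∫ ω in Sᶜ, |X ω - μ|) + (volume Sᶜ).toReal • R := h1
      _ = (∫ ω in Sᶜ, |X ω - μ|) + R * (volume Sᶜ).toReal := by rw [smul_eq_mul]; ring
  have hmono : ∫ ω in Sᶜ, |X ω - μ| ≤ ∫ ω, Y ω := by
    rw [hYdef, integral_indicator hAm]
    refine setIntegral_mono_set hXabs.integrableOn
      (Filter.Eventually.of_forall (fun ω => abs_nonneg _)) (Filter.Eventually.of_forall hScA)
  have hRP : R * (volume Sᶜ).toReal ≤ R * (2 * E) := mul_le_mul_of_nonneg_left hPSc hR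
  calc |∫ ω in Sᶜ, X ω| ≤ ∫ ω in Sᶜ, |X ω| := habs
    _ ≤ (∫ ω in Sᶜ, |X ω - μ|) + R * (volume Sᶜ).toReal := hbnd
    _ ≤ 4 * Δ * E + R * (2 * E) := add_le_add (le_trans hmono hYle) hRP
    _ ≤ 4 * (2 * Δ + R) * E := by nlinarith
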